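/- Let X₁ and X₂ be complex Banach spaces with X₁ nonzero, let m ≥ 2 be an integer, and let T : X₁ → X₂ and S : X₁* → X₂* be bijective linear maps such that ⟨Tx, Sf⟩^m = ⟨x, f⟩^m for all x ∈ X₁ and f ∈ X₁*. Then there exists a single scalar λ ∈ ℂ with λ^m = 1 such that ⟨Tx, Sf⟩ = λ⟨x, f⟩ for all x ∈ X₁ and f ∈ X₁*. -/

import Mathlib

/-- Key scalar lemma: if `(a + t b)^m = (c + t d)^m` for all `t : ℂ` and `c ≠ 0`,
then `b = (a/c) * d`. -/
lemma key_scalar (m : ℕ) (hm : 1 ≤ m) (a b c d : ℂ) (hc : c ≠ 0)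
    (H : ∀ t : ℂ, (a + t * b) ^ m = (c + t * d) ^ m) : b = (a / c) * d := by
  by_cases hd : d = 0
  · subst hd
    -- then (a + t b)^m = c^m for all t; if b ≠ 0 take t = -a/b
    by_contra hb
    rw [mul_zero] at hb
    have := H (-a / b)
    rw [show a + -a / b * b = 0 from by field_simp; ring, mul_zero, add_zero,
      zero_pow (by omega : m ≠ 0)] at this
    exact pow_ne_zero m hc this.symm
  · -- pigeonhole: the Möbius map t ↦ (a+tb)/(c+td) takes values in m-th roots of unity
    have hadbc : a * d = b * c := by
      have hsinf : ({-c / d}ᶜ : Set ℂ).Infinite :=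
        (Set.finite_singleton _).infinite_compl
      have hfin : ({z : ℂ | z ^ m = 1}).Finite := by
        apply Set.Finite.subset ((Polynomial.nthRoots m (1 : ℂ)).toFinset : Finset ℂ).finite_toSet
        intro z hz
        simp only [Multiset.mem_toFinset, Finset.coe_sort_coe, Finset.mem_coe]
        rw [Polynomial.mem_nthRoots (by omega)]
        exact hz
      have hden : ∀ t : ℂ, t ∈ ({-c / d}ᶜ : Set ℂ) → c + t * d ≠ 0 := by
        intro t ht hzero
        apply ht
        exact (eq_div_iff hd).mpr (by linear_combination hzero)
      have hmaps : Set.MapsTo (fun t : ℂ => (a + t * b) / (c + t * d))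
          ({-c / d}ᶜ : Set ℂ) {z : ℂ | z ^ m = 1} := by
        intro t ht
        have hden' := hden t ht
        simp only [Set.mem_setOf_eq, div_pow, H t]
        exact div_self (pow_ne_zero m hden')
      obtain ⟨t₁, ht₁, t₂, ht₂, hne, heq⟩ :=
        hsinf.exists_ne_map_eq_of_mapsTo hmaps hfin
      have h1 := hden t₁ ht₁
      have h2 := hden t₂ ht₂
      rw [div_eq_div_iff h1 h2] at heq
      have : (t₂ - t₁) * (a * d - b * c) = 0 := by linear_combination heq
      rcases mul_eq_zero.mp this with h | h
      · exact absurd (sub_eq_zero.mp h).symm hne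
      · exact sub_eq_zero.mp h
    field_simp
    linear_combination -hadbc

/-- If two "affine along lines" functionals have equal `m`-th powers everywhere and the
second is nonzero at `v₀`, they are proportional with ratio `φ v₀ / ψ v₀`. -/
lemma key_fun {V : Type*} [AddCommGroup V] [Module ℂ V]
    (m : ℕ) (hm : 1 ≤ m) (φ ψ : V → ℂ)
    (hφ : ∀ (t : ℂ) (v w : V), φ (w + t • v) = φ w + t * φ v)
    (hψ : ∀ (t : ℂ) (v w : V), ψ (w + t • v) = ψ w + t * ψ v)
    (hpow : ∀ v, (φ v) ^ m = (ψ v) ^ m)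
    (v₀ : V) (hv₀ : ψ v₀ ≠ 0) :
    ∀ v, φ v = (φ v₀ / ψ v₀) * ψ v := by
  intro v
  exact key_scalar m hm (φ v₀) (φ v) (ψ v₀) (ψ v) hv₀ (fun t => by
    rw [← hφ t v v₀, ← hψ t v v₀]; exact hpow _)

theorem dual_pair_mth_root {X₁ X₂ : Type*}
    [NormedAddCommGroup X₁] [NormedSpace ℂ X₁] [CompleteSpace X₁] [Nontrivial X₁]
    [NormedAddCommGroup X₂] [NormedSpace ℂ X₂] [CompleteSpace X₂]
    (m : ℕ) (hm : 2 ≤ m)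
    (T : X₁ →ₗ[ℂ] X₂) (hT : Function.Bijective T)
    (S : StrongDual ℂ X₁ →ₗ[ℂ] StrongDual ℂ X₂) (hS : Function.Bijective S)
    (h : ∀ (x : X₁) (f : StrongDual ℂ X₁), (S f) (T x) ^ m = (f x) ^ m) :
    ∃ lam : ℂ, lam ^ m = 1 ∧
      ∀ (x : X₁) (f : StrongDual ℂ X₁), (S f) (T x) = lam * f x := by
  have hm1 : 1 ≤ m := by omega
  -- get x₀ ≠ 0 and f₀ with f₀ x₀ ≠ 0
  obtain ⟨x₀, hx₀⟩ := exists_ne (0 : X₁)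
  obtain ⟨f₀, -, hf₀x₀⟩ := exists_dual_vector ℂ x₀ (norm_ne_zero_iff.mpr hx₀)
  have hf₀ : f₀ x₀ ≠ 0 := by
    rw [hf₀x₀]
    simp [norm_eq_zero, hx₀]
  set lam : ℂ := (S f₀) (T x₀) / (f₀ x₀) with hlam
  -- step 1: vary f at fixed x₀
  have step1 : ∀ f : StrongDual ℂ X₁, (S f) (T x₀) = lam * f x₀ := by
    have := key_fun m hm1 (fun f => (S f) (T x₀)) (fun f => f x₀)
      (by intro t v w; simp) (by intro t v w; simp)
      (fun f => h x₀ f) f₀ hf₀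
    intro f; exact this f
  -- step 2: for f with f x₀ ≠ 0, vary x
  have step2 : ∀ (f : StrongDual ℂ X₁), f x₀ ≠ 0 →
      ∀ x, (S f) (T x) = lam * f x := by
    intro f hf x
    have key := key_fun m hm1 (fun x => (S f) (T x)) (fun x => f x)
      (by intro t v w; simp) (by intro t v w; simp)
      (fun x => h x f) x₀ hf x
    rw [key, step1 f]; field_simp
  refine ⟨lam, ?_, ?_⟩
  · rw [hlam, div_pow, h x₀ f₀, div_self (pow_ne_zero m hf₀)]
  · intro x f
    by_cases hf : f x₀ = 0
    · have h1 := step2 (f + f₀) (by simpa [hf] using hf₀) x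
      have h2 := step2 f₀ hf₀ x
      simp only [map_add, ContinuousLinearMap.add_apply] at h1
      rw [h2] at h1
      have : (S f) (T x) = lam * (f x + f₀ x) - lam * f₀ x := by
        rw [← h1]; ring
      rw [this]; ring
    · exact step2 f hf x
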